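/- Let R be a commutative Noetherian ring, x ∈ R, and A an Artinian R-module. If x ∉ p for every non-maximal attached prime p of A, then A/xA has finite length. -/

import Mathlib

open Opposite CategoryTheory CategoryTheory.Limits

noncomputable section

universe u

variable (R : Type u) [CommRing R]

/-- The directed system `n ↦ M ⧸ I^n M` (contravariant in `n`). -/
def modIdealPowersDiagram (I : Ideal R) (M : Type u) [AddCommGroup M] [Module R M] :
    ℕᵒᵖ ⥤ ModuleCat.{u} R where
  obj t := ModuleCat.of R (M ⧸ (I ^ (unop t) • ⊤ : Submodule R M))
  map w := ModuleCat.ofHom (Submodule.mapQ _ _ LinearMap.id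
    (Submodule.smul_mono_left (Ideal.pow_le_pow_right w.unop.down.down)))
  map_id t := by
    ext : 1
    exact Submodule.mapQ_id _
  map_comp f g := by
    ext : 1
    ext x
    rfl

/-- `H^j_I(M,N) = colim_n Ext^j_R(M/I^nM, N)`, the generalized local cohomology module. -/
def genLocalCohomology (I : Ideal R) (M N : Type u) [AddCommGroup M] [Module R M]
    [AddCommGroup N] [Module R N] (j : ℕ) : ModuleCat.{u} R :=
  colimit ((modIdealPowersDiagram R I M).op ⋙ Ext R (ModuleCat.{u} R) j ⋙
    (evaluation (ModuleCat.{u} R) (ModuleCat.{u} R)).obj (ModuleCat.of R N))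

/-- `Ext^j_R(A, B)` as an `R`-module. -/
def extModule (j : ℕ) (A B : Type u) [AddCommGroup A] [Module R A]
    [AddCommGroup B] [Module R B] : ModuleCat.{u} R :=
  ((Ext R (ModuleCat.{u} R) j).obj (op (ModuleCat.of R A))).obj (ModuleCat.of R B)

/-- `K` is `I`-cofinite: `Supp K ⊆ V(I)` and every `Ext^j_R(R/I, K)` is finitely generated. -/
def IsCofinite (I : Ideal R) (K : Type u) [AddCommGroup K] [Module R K] : Prop :=
  Module.support R K ⊆ PrimeSpectrum.zeroLocus (I : Set R) ∧
    ∀ j : ℕ, Module.Finite R (extModule R j (R ⧸ I) K)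

/-- The `I`-torsion submodule `Γ_I(N)`. -/
def gammaTorsion (I : Ideal R) (N : Type u) [AddCommGroup N] [Module R N] : Submodule R N :=
  ⨆ k : ℕ, Submodule.torsionBySet R N ((I ^ k : Ideal R) : Set R)

/-- `I_M := ann_R(M/IM)`. -/
def idealAnnQuot (I : Ideal R) (M : Type u) [AddCommGroup M] [Module R M] : Ideal R :=
  Module.annihilator R (M ⧸ (I • ⊤ : Submodule R M))

/-- A minimax module: a f.g. submodule with Artinian quotient. -/
def IsMinimax (K : Type u) [AddCommGroup K] [Module R K] : Prop :=
  ∃ T : Submodule R K, Module.Finite R T ∧ IsArtinian R (K ⧸ T)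

/-- A nontrivial module is `p`-secondary if every `a : R` acts surjectively or nilpotently
and `p = √(ann S)`. -/
def IsSecondary (p : Ideal R) (S : Type u) [AddCommGroup S] [Module R S] : Prop :=
  Nontrivial S ∧ (∀ a : R, Function.Surjective (fun s : S => a • s) ∨
    ∃ n : ℕ, ∀ s : S, a ^ n • s = 0) ∧ p = (Module.annihilator R S).radical

/-- The attached primes of `A`: primes `p` such that `A` has a `p`-secondary quotient. -/
def attachedPrimes (A : Type u) [AddCommGroup A] [Module R A] : Set (Ideal R) :=
  { p | ∃ Q : Submodule R A, IsSecondary R p (A ⧸ Q) }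


/-! ### Auxiliary material for `stmt3` -/

section SecondaryAux

open Function

/-- Auxiliary: a submodule is "secondary" if it is nonzero and every ring element acts on it
either surjectively or nilpotently. -/
def SecondarySub {A : Type u} [AddCommGroup A] [Module R A] (S : Submodule R A) : Prop :=
  S ≠ ⊥ ∧ ∀ a : R, Submodule.map (LinearMap.lsmul R A a) S = S ∨ ∃ n : ℕ, ∀ s ∈ S, a ^ n • s = 0

variable {R}

theorem lsmul_pow_apply {A : Type u} [AddCommGroup A] [Module R A] (a : R) (n : ℕ) (s : A) :
    (LinearMap.lsmul R A a ^ n) s = a ^ n • s := by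
  induction n generalizing s with
  | zero => simp
  | succ n ih =>
      rw [pow_succ, Module.End.mul_apply, LinearMap.lsmul_apply, ih, smul_smul, ← pow_succ]

/-- Every Artinian module is a finite sum of secondary submodules (Kirby–Macdonald). -/
theorem exists_secondary_rep {A : Type u} [AddCommGroup A] [Module R A] [IsArtinian R A]
    (N : Submodule R A) :
    ∃ 𝓢 : Finset (Submodule R A), 𝓢.sup id = N ∧ ∀ S ∈ 𝓢, SecondarySub R S := by
  classical
  have wf : WellFounded ((· < ·) : Submodule R A → Submodule R A → Prop) := IsWellFounded.wf
  refine wf.induction (C := fun N => ∃ 𝓢 : Finset (Submodule R A),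
    𝓢.sup id = N ∧ ∀ S ∈ 𝓢, SecondarySub R S) N ?_
  clear N; intro N IH
  by_cases hN : N = ⊥
  · exact ⟨∅, by simp [hN], by simp⟩
  by_cases hred : ∃ U V : Submodule R A, U < N ∧ V < N ∧ U ⊔ V = N
  · obtain ⟨U, V, hU, hV, hUV⟩ := hred
    obtain ⟨𝓢U, hsU, hU2⟩ := IH U hU
    obtain ⟨𝓢V, hsV, hV2⟩ := IH V hV
    refine ⟨𝓢U ∪ 𝓢V, ?_, ?_⟩
    · rw [Finset.sup_union, hsU, hsV, hUV]
    · intro S hS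
      rcases Finset.mem_union.mp hS with h | h
      exacts [hU2 S h, hV2 S h]
  · push_neg at hred
    refine ⟨{N}, by simp, ?_⟩
    intro S hS
    rw [Finset.mem_singleton] at hS
    subst hS
    refine ⟨hN, fun a => ?_⟩
    set f := LinearMap.lsmul R A a with hf
    have hmono : Monotone fun n => OrderDual.toDual (Submodule.map (f ^ n) S) := by
      apply monotone_nat_of_le_succ
      intro n
      show Submodule.map (f ^ (n + 1)) S ≤ Submodule.map (f ^ n) S
      rintro _ ⟨s, hs, rfl⟩
      refine ⟨f s, ?_, ?_⟩
      · show a • s ∈ S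
        exact S.smul_mem a hs
      · rw [pow_succ, Module.End.mul_apply]
    obtain ⟨n₀, hn₀⟩ := IsArtinian.monotone_stabilizes
      (⟨fun n => OrderDual.toDual (Submodule.map (f ^ n) S), hmono⟩ : ℕ →o (Submodule R A)ᵒᵈ)
    set k := n₀ + 1 with hk
    have hstab : Submodule.map (f ^ k) S = Submodule.map (f ^ (k + k)) S := by
      have h1 := hn₀ k (by omega)
      have h2 := hn₀ (k + k) (by omega)
      exact (h1.symm.trans h2 :)
    have hmaple : Submodule.map (f ^ k) S ≤ S := by
      rintro _ ⟨s, hs, rfl⟩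
      rw [lsmul_pow_apply]
      exact S.smul_mem _ hs
    have hdecomp : S ≤ (S ⊓ LinearMap.ker (f ^ k)) ⊔ Submodule.map (f ^ k) S := by
      intro z hz
      have hz' : (f ^ k) z ∈ Submodule.map (f ^ (k + k)) S :=
        hstab ▸ Submodule.mem_map_of_mem hz
      obtain ⟨w, hw, hww⟩ := hz'
      refine Submodule.mem_sup.mpr ⟨z - (f ^ k) w, ?_, (f ^ k) w,
        Submodule.mem_map_of_mem hw, by abel⟩
      refine Submodule.mem_inf.mpr ⟨?_, ?_⟩
      · refine S.sub_mem hz ?_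
        rw [lsmul_pow_apply]
        exact S.smul_mem _ hw
      · rw [LinearMap.mem_ker, map_sub]
        have heq : (f ^ k) ((f ^ k) w) = (f ^ (k + k)) w := by
          rw [← Module.End.mul_apply, ← pow_add]
        rw [heq, hww, sub_self]
    by_cases hmap : Submodule.map (f ^ k) S = S
    · left
      refine le_antisymm ?_ ?_
      · rintro _ ⟨s, hs, rfl⟩
        exact S.smul_mem a hs
      · conv_lhs => rw [← hmap]
        rintro _ ⟨s, hs, rfl⟩
        refine ⟨(f ^ n₀) s, ?_, ?_⟩
        · rw [lsmul_pow_apply]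
          exact S.smul_mem _ hs
        · rw [hk, pow_succ', Module.End.mul_apply]
    · right
      have hsupN : (S ⊓ LinearMap.ker (f ^ k)) ⊔ Submodule.map (f ^ k) S = S :=
        le_antisymm (sup_le inf_le_left hmaple) hdecomp
      have hlt : Submodule.map (f ^ k) S < S := lt_of_le_of_ne hmaple hmap
      have hinf : S ⊓ LinearMap.ker (f ^ k) = S := by
        rcases lt_or_eq_of_le (inf_le_left : S ⊓ LinearMap.ker (f ^ k) ≤ S) with h | h
        · exact absurd hsupN (hred _ _ h hlt)
        · exact h
      have hle : S ≤ LinearMap.ker (f ^ k) := inf_eq_left.mp hinf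
      refine ⟨k, fun s hs => ?_⟩
      have hks := LinearMap.mem_ker.mp (hle hs)
      rwa [lsmul_pow_apply] at hks

/-- An Artinian module annihilated by a maximal ideal is Noetherian. -/
theorem isNoetherian_of_maximal_le_ann {p : Ideal R} (hp : p.IsMaximal)
    (M : Type u) [AddCommGroup M] [Module R M] [IsArtinian R M]
    (h : p ≤ Module.annihilator R M) : IsNoetherian R M := by
  have htor : Module.IsTorsionBySet R M (p : Set R) := fun x a =>
    Module.mem_annihilator.mp (h a.2) x
  letI := htor.module
  letI : Field (R ⧸ p) := Ideal.Quotient.field p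
  haveI : IsScalarTower R (R ⧸ p) M := htor.isScalarTower
  haveI : IsArtinian (R ⧸ p) M := isArtinian_of_tower R inferInstance
  haveI : IsNoetherian (R ⧸ p) M := by
    have hA : IsArtinian (R ⧸ p) M := inferInstance
    exact (IsSemisimpleModule.finite_tfae.out 2 1).mp hA
  let e : Submodule R M ↪o Submodule (R ⧸ p) M :=
    { toFun := fun q =>
        { carrier := q
          add_mem' := fun h1 h2 => q.add_mem h1 h2
          zero_mem' := q.zero_mem
          smul_mem' := by rintro ⟨b⟩ x hx; exact q.smul_mem b hx }
      inj' := fun q1 q2 hq => by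
        ext y
        exact Iff.of_eq (congrArg (fun s : Submodule (R ⧸ p) M => y ∈ s) hq)
      map_rel_iff' := Iff.rfl }
  haveI : WellFoundedGT (Submodule R M) := e.wellFoundedGT
  exact isNoetherian_mk ‹_›

/-- An Artinian module annihilated by a power of a maximal ideal is Noetherian. -/
theorem isNoetherian_of_pow_maximal_le_ann {p : Ideal R} (hp : p.IsMaximal) :
    ∀ (t : ℕ) (M : Type u) [AddCommGroup M] [Module R M] [_i : IsArtinian R M],
      p ^ t ≤ Module.annihilator R M → IsNoetherian R M := by
  intro t
  induction t with
  | zero =>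
      intro M _ _ _ h
      have : Subsingleton M := by
        refine ⟨fun m₁ m₂ => ?_⟩
        have h1 : (1 : R) ∈ p ^ 0 := by rw [pow_zero, Ideal.one_eq_top]; trivial
        have h2 := Module.mem_annihilator.mp (h h1)
        calc m₁ = (1 : R) • m₁ := (one_smul R m₁).symm
          _ = 0 := h2 m₁
          _ = (1 : R) • m₂ := (h2 m₂).symm
          _ = m₂ := one_smul R m₂
      infer_instance
  | succ t IH =>
      intro M _ _ _ h
      set C : Submodule R M := p • ⊤ with hC
      have hCbot : p ^ (t + 1) • (⊤ : Submodule R M) = ⊥ := by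
        rw [eq_bot_iff]
        refine Submodule.smul_le.mpr fun r hr m _ => ?_
        rw [Submodule.mem_bot]
        exact Module.mem_annihilator.mp (h hr) m
      have hIC : IsNoetherian R C := by
        refine IH C ?_
        intro a ha
        rw [Module.mem_annihilator]
        rintro ⟨c, hc⟩
        have hmem : a • c ∈ p ^ t • C := Submodule.smul_mem_smul ha hc
        rw [hC, ← Submodule.smul_assoc, Ideal.smul_eq_mul, ← pow_succ, hCbot,
          Submodule.mem_bot] at hmem
        exact Subtype.ext hmem
      have hQ : IsNoetherian R (M ⧸ C) := by
        refine isNoetherian_of_maximal_le_ann hp _ ?_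
        intro a ha
        rw [Module.mem_annihilator]
        intro z
        obtain ⟨m, rfl⟩ := Submodule.mkQ_surjective C z
        rw [← map_smul, Submodule.mkQ_apply, Submodule.Quotient.mk_eq_zero]
        exact Submodule.smul_mem_smul ha Submodule.mem_top
      exact (isNoetherian_iff_submodule_quotient C).mpr ⟨hIC, hQ⟩

theorem finset_sup_map {A B : Type u} [AddCommGroup A] [Module R A] [AddCommGroup B] [Module R B]
    (f : A →ₗ[R] B) (𝓢 : Finset (Submodule R A)) :
    Submodule.map f (𝓢.sup id) = 𝓢.sup fun S => Submodule.map f S := by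
  classical
  induction 𝓢 using Finset.induction_on with
  | empty => simp
  | insert _ _ h ih => rw [Finset.sup_insert, Finset.sup_insert, Submodule.map_sup, ih]; rfl

theorem finset_sup_fg {ι : Type*} {B : Type u} [AddCommGroup B] [Module R B]
    (𝓢 : Finset ι) (g : ι → Submodule R B) (h : ∀ i ∈ 𝓢, (g i).FG) : (𝓢.sup g).FG :=
  Finset.sup_induction Submodule.fg_bot (fun a ha b hb => ha.sup hb) h

end SecondaryAux

/-- If `x` avoids every non-maximal attached prime of the Artinian module `A`,
then `A/xA` has finite length. -/
theorem stmt3 [IsNoetherianRing R] (x : R) (A : Type u) [AddCommGroup A] [Module R A]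
    [IsArtinian R A]
    (hx : ∀ p ∈ attachedPrimes R A, ¬ p.IsMaximal → x ∉ p) :
    IsFiniteLength R (A ⧸ LinearMap.range (LinearMap.lsmul R A x)) := by
  classical
  have hex : ∃ n : ℕ, ∃ 𝓢 : Finset (Submodule R A), 𝓢.card = n ∧ 𝓢.sup id = ⊤ ∧
      ∀ S ∈ 𝓢, SecondarySub R S := by
    obtain ⟨𝓢, h1, h2⟩ := exists_secondary_rep (R := R) (⊤ : Submodule R A)
    exact ⟨𝓢.card, 𝓢, rfl, h1, h2⟩
  obtain ⟨𝓢, hcard, hsup, hsec⟩ := Nat.find_spec hex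
  set X := LinearMap.range (LinearMap.lsmul R A x) with hX
  rw [isFiniteLength_iff_isNoetherian_isArtinian]
  refine ⟨?_, inferInstance⟩
  have key : ∀ S ∈ 𝓢, (Submodule.map X.mkQ S).FG := by
    intro S hS
    rcases (hsec S hS).2 x with hsurj | ⟨m, hm⟩
    · have hSX : S ≤ X := by
        rw [← hsurj]
        rintro _ ⟨s, hs, rfl⟩
        exact ⟨s, rfl⟩
      have hb : Submodule.map X.mkQ S = ⊥ := by
        rw [eq_bot_iff]
        rintro _ ⟨s, hs, rfl⟩
        rw [Submodule.mem_bot, Submodule.mkQ_apply, Submodule.Quotient.mk_eq_zero]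
        exact hSX hs
      rw [hb]
      exact Submodule.fg_bot
    · set T := (𝓢.erase S).sup id with hT
      have hST : S ⊔ T = ⊤ := by
        have h := hsup
        rw [← Finset.insert_erase hS, Finset.sup_insert] at h
        exact h
      have hTne : T ≠ ⊤ := by
        intro hTop
        have hpos : 0 < 𝓢.card := Finset.card_pos.mpr ⟨S, hS⟩
        have hlt : (𝓢.erase S).card < Nat.find hex := by
          rw [Finset.card_erase_of_mem hS, ← hcard] at *
          omega
        exact Nat.find_min hex hlt
          ⟨𝓢.erase S, rfl, hTop, fun S' hS' => hsec S' (Finset.mem_of_mem_erase hS')⟩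
      have hnt : Nontrivial (A ⧸ T) :=
        (Submodule.Quotient.nontrivial_iff (p := T)).mpr hTne
      have hsurjS : ∀ z : A ⧸ T, ∃ s ∈ S, T.mkQ s = z := by
        intro z
        obtain ⟨y, rfl⟩ := T.mkQ_surjective z
        have hy : y ∈ S ⊔ T := hST ▸ Submodule.mem_top
        obtain ⟨s, hs, t, ht, rfl⟩ := Submodule.mem_sup.mp hy
        refine ⟨s, hs, ?_⟩
        have ht0 : T.mkQ t = 0 := by
          rw [Submodule.mkQ_apply, Submodule.Quotient.mk_eq_zero]
          exact ht
        rw [map_add, ht0, add_zero]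
      have hsurj_quot : ∀ a : R, Submodule.map (LinearMap.lsmul R A a) S = S →
          Function.Surjective (fun b : A ⧸ T => a • b) := by
        intro a h z
        obtain ⟨s, hs, rfl⟩ := hsurjS z
        rw [← h] at hs
        obtain ⟨s', hs', rfl⟩ := hs
        exact ⟨T.mkQ s', ((T.mkQ).map_smul a s').symm⟩
      have hnil_quot : ∀ (a : R) (n : ℕ), (∀ s ∈ S, a ^ n • s = 0) →
          ∀ b : A ⧸ T, a ^ n • b = 0 := by
        intro a n hn b
        obtain ⟨s, hs, rfl⟩ := hsurjS b
        rw [← map_smul, hn s hs, map_zero]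
      have hdichB : ∀ a : R, Function.Surjective (fun b : A ⧸ T => a • b) ∨
          ∃ n : ℕ, ∀ b : A ⧸ T, a ^ n • b = 0 := fun a =>
        ((hsec S hS).2 a).imp (hsurj_quot a) fun ⟨m', hm'⟩ => ⟨m', hnil_quot a m' hm'⟩
      set q := (Module.annihilator R (A ⧸ T)).radical with hq
      have hsecB : IsSecondary R q (A ⧸ T) := ⟨hnt, hdichB, hq⟩
      have hatt : q ∈ attachedPrimes R A := ⟨T, hsecB⟩
      have hxq : x ∈ q := by
        rw [hq, Ideal.mem_radical_iff]
        exact ⟨m, Module.mem_annihilator.mpr (hnil_quot x m hm)⟩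
      have hqmax : q.IsMaximal := by
        by_contra hq'
        exact hx q hatt hq' hxq
      have hpann : q ≤ (Module.annihilator R S).radical := by
        intro a ha
        rcases (hsec S hS).2 a with h | ⟨m', hm'⟩
        · exfalso
          obtain ⟨j, hj⟩ := Ideal.mem_radical_iff.mp ha
          have hsa := hsurj_quot a h
          have hsaj : ∀ (i : ℕ) (z : A ⧸ T), ∃ w, a ^ i • w = z := by
            intro i
            induction i with
            | zero => intro z; exact ⟨z, by simp⟩
            | succ i ih =>
                intro z
                obtain ⟨w, hw⟩ := ih z
                obtain ⟨w', hw'⟩ := hsa w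
                refine ⟨w', ?_⟩
                rw [pow_succ, mul_smul, show a • w' = w from hw']
                exact hw
          have hz : ∀ z : A ⧸ T, z = 0 := by
            intro z
            obtain ⟨w, rfl⟩ := hsaj j z
            exact Module.mem_annihilator.mp hj w
          rcases hnt with ⟨b, c, hbc⟩
          exact hbc ((hz b).trans (hz c).symm)
        · rw [Ideal.mem_radical_iff]
          refine ⟨m', Module.mem_annihilator.mpr fun s => ?_⟩
          exact Subtype.ext (hm' s.1 s.2)
      have hr_ne : (Module.annihilator R S).radical ≠ ⊤ := by
        intro htop
        apply (hsec S hS).1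
        rw [eq_bot_iff]
        intro s hs
        have h1 : (1 : R) ∈ (Module.annihilator R S).radical := htop ▸ Submodule.mem_top
        obtain ⟨n, hn⟩ := Ideal.mem_radical_iff.mp h1
        have h2 := Module.mem_annihilator.mp hn (⟨s, hs⟩ : S)
        have h3 := congrArg Subtype.val h2
        simpa using h3
      obtain ⟨t, hts⟩ : ∃ t : ℕ, q ^ t ≤ Module.annihilator R S :=
        Ideal.exists_pow_le_of_le_radical_of_fg hpann (IsNoetherian.noetherian q)
      have hkill : q ^ t ≤ Module.annihilator R (Submodule.map X.mkQ S) := by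
        intro a ha
        rw [Module.mem_annihilator]
        rintro ⟨_, s, hs, rfl⟩
        have h0 : a • s = 0 := by
          have h2 := Module.mem_annihilator.mp (hts ha) (⟨s, hs⟩ : S)
          have h3 := congrArg Subtype.val h2
          simpa using h3
        apply Subtype.ext
        show a • X.mkQ s = 0
        rw [← map_smul, h0, map_zero]
      haveI := isNoetherian_of_pow_maximal_le_ann hqmax t (Submodule.map X.mkQ S) hkill
      exact (Submodule.fg_top _).mp (IsNoetherian.noetherian ⊤)
  have htop : (⊤ : Submodule R (A ⧸ X)) = 𝓢.sup fun S => Submodule.map X.mkQ S := by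
    have h1 : Submodule.map X.mkQ ⊤ = ⊤ := by
      rw [Submodule.map_top, Submodule.range_mkQ]
    rw [← h1, ← hsup, finset_sup_map]
  have hfg : (⊤ : Submodule R (A ⧸ X)).FG := by
    rw [htop]
    exact finset_sup_fg 𝓢 _ key
  haveI : Module.Finite R (A ⧸ X) := Module.finite_def.mpr hfg
  exact isNoetherian_of_isNoetherianRing_of_finite R _


end
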